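/- Let 1 ≤ p ≤ q ≤ ∞ and let D be a 2-partition of Γ whose deviation σ_∞(D) is minimal among all 2-partitions of Γ. If for some λ ∈ [0,1] the partition D minimizes F_{λ,q} among all 2-partitions, then D also minimizes F_{λ,p} among all 2-partitions. Consequently, for 2-partitions the first transition value λ^F(p, Γ) (the largest λ up to which some deviation-minimal 2-partition remains a minimizer of F_{λ,p}) is nonincreasing in p. -/
import Mathlib


open Finset

namespace Districting

variable {V : Type*} [Fintype V] [DecidableEq V]

/-- An `N`-partition of a graph `G`: a family of `N` pairwise disjoint sets of
vertexes covering all of `V`, each inducing a connected subgraph of `G`. -/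
structure Partition (G : SimpleGraph V) (N : ℕ) where
  part : Fin N → Finset V
  disj : ∀ k l, k ≠ l → Disjoint (part k) (part l)
  covers : ∀ v : V, ∃ k, v ∈ part k
  connected : ∀ k, (G.induce (part k : Set V)).Connected

/-- The mass of a set of vertexes w.r.t. the vertex weight `f`. -/
def mass (f : V → ℝ) (s : Finset V) : ℝ := ∑ v ∈ s, f v

/-- The total mass of the graph w.r.t. the vertex weight `f`. -/
def totalMass (f : V → ℝ) : ℝ := ∑ v : V, f v

open Classical in
/-- The cut (perimeter) energy of a partition: the sum of the weights of edges
whose endpoints lie in different parts. -/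
noncomputable def cutEnergy (G : SimpleGraph V) (g : Sym2 V → ℝ) {N : ℕ}
    (P : Partition G N) : ℝ :=
  ∑ e : Sym2 V,
    if e ∈ G.edgeSet ∧ ∀ k, ¬ (∀ v ∈ e, v ∈ P.part k) then g e else 0

/-- The deviation energy of a partition: the standard deviation of the masses
from the mean mass. -/
noncomputable def deviation {G : SimpleGraph V} (f : V → ℝ) {N : ℕ}
    (P : Partition G N) : ℝ :=
  Real.sqrt (∑ k : Fin N, (mass f (P.part k) - totalMass f / (N : ℝ)) ^ 2)

/-- The energy functional `F_λ`. -/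
noncomputable def energy (G : SimpleGraph V) (f : V → ℝ) (g : Sym2 V → ℝ)
    (lam : ℝ) {N : ℕ} (P : Partition G N) : ℝ :=
  lam * cutEnergy G g P + (1 - lam) * deviation f P

end Districting

namespace Districting

/-- The `p`-deviation energy (`p`-th central moment) of a partition, `p ∈ [1,∞)`. -/
noncomputable def pDeviation {V : Type*} [Fintype V] [DecidableEq V]
    {G : SimpleGraph V} (f : V → ℝ) (p : ℝ) {N : ℕ} (P : Partition G N) : ℝ :=
  (∑ k : Fin N, |mass f (P.part k) - totalMass f / (N : ℝ)| ^ p) ^ (1 / p)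

/-- The `∞`-deviation energy of a partition. -/
noncomputable def infDeviation {V : Type*} [Fintype V] [DecidableEq V]
    {G : SimpleGraph V} (f : V → ℝ) {N : ℕ} (P : Partition G N) : ℝ :=
  ⨆ k : Fin N, |mass f (P.part k) - totalMass f / (N : ℝ)|

/-- The energy functional `F_{λ,p}` with `p`-deviation penalization. -/
noncomputable def energyP {V : Type*} [Fintype V] [DecidableEq V]
    (G : SimpleGraph V) (f : V → ℝ) (g : Sym2 V → ℝ)
    (lam p : ℝ) {N : ℕ} (P : Partition G N) : ℝ :=
  lam * cutEnergy G g P + (1 - lam) * pDeviation f p P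

/-- The energy functional `F_{λ,∞}` with `∞`-deviation penalization. -/
noncomputable def energyInf {V : Type*} [Fintype V] [DecidableEq V]
    (G : SimpleGraph V) (f : V → ℝ) (g : Sym2 V → ℝ)
    (lam : ℝ) {N : ℕ} (P : Partition G N) : ℝ :=
  lam * cutEnergy G g P + (1 - lam) * infDeviation f P

end Districting

namespace Districting

/-- The first transition value `λ^F(p, Γ)`: the largest `λ` up to which some
deviation-minimal `2`-partition remains a minimizer of `F_{λ,p}`. -/
noncomputable def firstTransition {V : Type*} [Fintype V] [DecidableEq V]
    (G : SimpleGraph V) (f : V → ℝ) (g : Sym2 V → ℝ) (p : ℝ) : ℝ :=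
  sSup {lam : ℝ | lam ∈ Set.Icc (0 : ℝ) 1 ∧
    ∃ D : Partition G 2,
      (∀ Q : Partition G 2, infDeviation f D ≤ infDeviation f Q) ∧
      ∀ Q : Partition G 2, energyP G f g lam p D ≤ energyP G f g lam p Q}

lemma two_partition_mass {V : Type*} [Fintype V] [DecidableEq V]
    {G : SimpleGraph V} (f : V → ℝ) (P : Partition G 2) :
    mass f (P.part 0) + mass f (P.part 1) = totalMass f := by
  have hunion : P.part 0 ∪ P.part 1 = Finset.univ := by
    ext v
    simp only [Finset.mem_union, Finset.mem_univ, iff_true]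
    obtain ⟨k, hk⟩ := P.covers v
    fin_cases k
    exacts [Or.inl hk, Or.inr hk]
  rw [mass, mass, ← Finset.sum_union (P.disj 0 1 (by decide)), hunion, totalMass]

lemma abs_eq_two_partition {V : Type*} [Fintype V] [DecidableEq V]
    {G : SimpleGraph V} (f : V → ℝ) (P : Partition G 2) :
    |mass f (P.part 1) - totalMass f / ((2 : ℕ) : ℝ)|
      = |mass f (P.part 0) - totalMass f / ((2 : ℕ) : ℝ)| := by
  have h := two_partition_mass f P
  have : mass f (P.part 1) - totalMass f / ((2 : ℕ) : ℝ)
      = -(mass f (P.part 0) - totalMass f / ((2 : ℕ) : ℝ)) := by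
    push_cast; linarith
  rw [this, abs_neg]

lemma infDeviation_two {V : Type*} [Fintype V] [DecidableEq V]
    {G : SimpleGraph V} (f : V → ℝ) (P : Partition G 2) :
    infDeviation f P = |mass f (P.part 0) - totalMass f / ((2 : ℕ) : ℝ)| := by
  unfold infDeviation
  apply le_antisymm
  · apply ciSup_le
    intro k
    fin_cases k
    · exact le_rfl
    · exact le_of_eq (abs_eq_two_partition f P)
  · exact le_ciSup (f := fun k : Fin 2 => |mass f (P.part k) - totalMass f / ((2 : ℕ) : ℝ)|) (Set.Finite.bddAbove (Set.finite_range _)) 0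

lemma infDeviation_nonneg {V : Type*} [Fintype V] [DecidableEq V]
    {G : SimpleGraph V} (f : V → ℝ) (P : Partition G 2) :
    0 ≤ infDeviation f P := by
  rw [infDeviation_two]; exact abs_nonneg _

lemma pDeviation_two {V : Type*} [Fintype V] [DecidableEq V]
    {G : SimpleGraph V} (f : V → ℝ) {p : ℝ} (hp : 1 ≤ p) (P : Partition G 2) :
    pDeviation f p P = (2 : ℝ) ^ (1 / p) * infDeviation f P := by
  have hp0 : p ≠ 0 := by linarith
  set d := |mass f (P.part 0) - totalMass f / ((2 : ℕ) : ℝ)| with hd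
  have hdnn : 0 ≤ d := abs_nonneg _
  rw [pDeviation, infDeviation_two, Fin.sum_univ_two, abs_eq_two_partition f P, ← hd]
  have : d ^ p + d ^ p = 2 * d ^ p := by ring
  rw [this, Real.mul_rpow (by norm_num) (Real.rpow_nonneg hdnn p),
    ← Real.rpow_mul hdnn, mul_one_div, div_self hp0, Real.rpow_one]

/-- for `1 ≤ p ≤ q ≤ ∞`, a deviation-minimal `2`-partition which
minimizes `F_{λ,q}` also minimizes `F_{λ,p}`; consequently the first transition
value `λ^F(p, Γ)` for `2`-partitions is nonincreasing in `p`. -/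
theorem first_transition_monotone
    {V : Type*} [Fintype V] [DecidableEq V]
    (G : SimpleGraph V) (hG : G.Connected)
    (f : V → ℝ) (hf : ∀ v, 0 < f v)
    (g : Sym2 V → ℝ) (hg : ∀ e ∈ G.edgeSet, 0 < g e) :
    (∀ p q : ℝ, 1 ≤ p → p ≤ q →
      ∀ D : Partition G 2,
        (∀ Q : Partition G 2, infDeviation f D ≤ infDeviation f Q) →
        ∀ lam ∈ Set.Icc (0 : ℝ) 1,
          (∀ Q : Partition G 2, energyP G f g lam q D ≤ energyP G f g lam q Q) →
          (∀ Q : Partition G 2, energyP G f g lam p D ≤ energyP G f g lam p Q)) ∧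
      (∀ p : ℝ, 1 ≤ p →
        ∀ D : Partition G 2,
          (∀ Q : Partition G 2, infDeviation f D ≤ infDeviation f Q) →
          ∀ lam ∈ Set.Icc (0 : ℝ) 1,
            (∀ Q : Partition G 2, energyInf G f g lam D ≤ energyInf G f g lam Q) →
            (∀ Q : Partition G 2, energyP G f g lam p D ≤ energyP G f g lam p Q)) ∧
      (∀ p q : ℝ, 1 ≤ p → p ≤ q →
        firstTransition G f g q ≤ firstTransition G f g p) := by
  have key : ∀ cp cq : ℝ, cq ≤ cp →
      ∀ D : Partition G 2,
        (∀ Q : Partition G 2, infDeviation f D ≤ infDeviation f Q) →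
        ∀ lam ∈ Set.Icc (0:ℝ) 1,
        (∀ Q : Partition G 2,
          lam * cutEnergy G g D + (1-lam) * (cq * infDeviation f D)
            ≤ lam * cutEnergy G g Q + (1-lam) * (cq * infDeviation f Q)) →
        ∀ Q : Partition G 2,
          lam * cutEnergy G g D + (1-lam) * (cp * infDeviation f D)
            ≤ lam * cutEnergy G g Q + (1-lam) * (cp * infDeviation f Q) := by
    intro cp cq hc D hDmin lam hlam hq Q
    have h1 := hq Q
    have h2 := hDmin Q
    have h3 : (0:ℝ) ≤ 1 - lam := by linarith [hlam.2]
    nlinarith [mul_le_mul_of_nonneg_left h2 (mul_nonneg h3 (sub_nonneg.2 hc))]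
  have hpart1 : ∀ p q : ℝ, 1 ≤ p → p ≤ q →
      ∀ D : Partition G 2,
        (∀ Q : Partition G 2, infDeviation f D ≤ infDeviation f Q) →
        ∀ lam ∈ Set.Icc (0 : ℝ) 1,
          (∀ Q : Partition G 2, energyP G f g lam q D ≤ energyP G f g lam q Q) →
          (∀ Q : Partition G 2, energyP G f g lam p D ≤ energyP G f g lam p Q) := by
    intro p q hp hpq D hDmin lam hlam hq
    have hq1 : 1 ≤ q := le_trans hp hpq
    have hc : (2:ℝ) ^ (1/q) ≤ (2:ℝ) ^ (1/p) :=
      Real.rpow_le_rpow_of_exponent_le one_le_two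
        (one_div_le_one_div_of_le (by linarith) hpq)
    have := key ((2:ℝ) ^ (1/p)) ((2:ℝ) ^ (1/q)) hc D hDmin lam hlam
      (by intro Q; have := hq Q; simpa [energyP, pDeviation_two f hq1] using this)
    intro Q
    simpa [energyP, pDeviation_two f hp] using this Q
  refine ⟨hpart1, ?_, ?_⟩
  · intro p hp D hDmin lam hlam hinf
    have hc : (1:ℝ) ≤ (2:ℝ) ^ (1/p) := by
      have : (2:ℝ) ^ (0:ℝ) ≤ (2:ℝ) ^ (1/p) :=
        Real.rpow_le_rpow_of_exponent_le one_le_two (by positivity)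
      simpa using this
    have := key ((2:ℝ) ^ (1/p)) 1 hc D hDmin lam hlam
      (by intro Q; have := hinf Q; simpa [energyInf, one_mul] using this)
    intro Q
    simpa [energyP, pDeviation_two f hp] using this Q
  · intro p q hp hpq
    unfold firstTransition
    apply Real.sSup_le
    · intro x hx
      obtain ⟨hIcc, D, hDmin, hq⟩ := hx
      apply le_csSup
      · refine ⟨1, ?_⟩
        rintro y ⟨hy, -⟩
        exact hy.2
      · exact ⟨hIcc, D, hDmin, hpart1 p q hp hpq D hDmin x hIcc hq⟩
    · apply Real.sSup_nonneg
      rintro y ⟨hy, -⟩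
      exact hy.1

end Districting
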